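/- For x ∈ ℝ^n set d_i = S_i(x) for 1 ≤ i ≤ n, define d'_i = max(d_i, (i/n)·d_n) for 1 ≤ i ≤ n−1 and d'_n = d_n, and let x' ∈ ℝ^n be the unique vector with S_i(x') = d'_i for all i. Then r(x) = r(x'). -/

import Mathlib

/-- The dominant cone `C = {x ∈ ℝⁿ : x₁ ≥ x₂ ≥ ⋯ ≥ xₙ}`. -/
def domCone (n : ℕ) : Set (EuclideanSpace ℝ (Fin n)) :=
  {x | ∀ i j : Fin n, i ≤ j → x j ≤ x i}

/-- `r` is the map sending each point of `ℝⁿ` to the (unique) closest point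
of the dominant cone. -/
def IsClosestPointMap (n : ℕ)
    (r : EuclideanSpace ℝ (Fin n) → EuclideanSpace ℝ (Fin n)) : Prop :=
  ∀ x, r x ∈ domCone n ∧ ∀ c ∈ domCone n, dist x (r x) ≤ dist x c

/-- `S_k(x) = x₁ + ⋯ + x_k`, the sum of the first `k` coordinates. -/
def psum {n : ℕ} (x : Fin n → ℝ) (k : ℕ) : ℝ :=
  ∑ j ∈ Finset.univ.filter (fun j : Fin n => (j : ℕ) < k), x j

namespace Stmt6Aux
open Finset

/-- Extension of a vector on `Fin n` to `ℕ`, by zero. -/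
def vext {n : ℕ} (z : Fin n → ℝ) (j : ℕ) : ℝ := if h : j < n then z ⟨j, h⟩ else 0

lemma psum_eq {n : ℕ} (y : Fin n → ℝ) {k : ℕ} (hk : k ≤ n) :
    psum y k = ∑ j ∈ range k, vext y j := by
  rw [psum, Finset.sum_filter]
  have h1 : (∑ i : Fin n, if (i : ℕ) < k then y i else 0)
      = ∑ i ∈ range n, (if i < k then vext y i else 0) := by
    rw [← Fin.sum_univ_eq_sum_range (fun i => if i < k then vext y i else 0) n]
    refine Finset.sum_congr rfl fun i _ => ?_
    simp [vext, i.isLt]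
  rw [h1, ← Finset.sum_filter]
  congr 1
  ext j
  simp only [Finset.mem_filter, Finset.mem_range]
  omega

/-- Abel summation for the Euclidean inner product in terms of partial sums. -/
lemma abel_formula {n : ℕ} (hn : 1 ≤ n) (y z : Fin n → ℝ) :
    ∑ i : Fin n, y i * z i
      = (∑ i ∈ range (n - 1), psum y (i + 1) * (vext z i - vext z (i + 1)))
        + psum y n * vext z (n - 1) := by
  have h1 : ∑ i : Fin n, y i * z i = ∑ i ∈ range n, vext z i • vext y i := by
    rw [← Fin.sum_univ_eq_sum_range (fun i => vext z i • vext y i) n]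
    refine Finset.sum_congr rfl fun i _ => ?_
    simp [vext, i.isLt, mul_comm]
  rw [h1, Finset.sum_range_by_parts (fun i => vext z i) (fun i => vext y i) n]
  have h2 : ∀ i ∈ range (n - 1),
      (vext z (i + 1) - vext z i) • (∑ j ∈ range (i + 1), vext y j)
        = -(psum y (i + 1) * (vext z i - vext z (i + 1))) := by
    intro i hi
    rw [Finset.mem_range] at hi
    rw [← psum_eq y (by omega : i + 1 ≤ n)]
    simp only [smul_eq_mul]
    ring
  rw [Finset.sum_congr rfl h2, ← psum_eq y le_rfl]
  simp only [Finset.sum_neg_distrib, smul_eq_mul]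
  ring

lemma inner_eq {n : ℕ} (y z : EuclideanSpace ℝ (Fin n)) :
    (inner ℝ y z : ℝ) = ∑ i : Fin n, y i * z i := by
  simp [PiLp.inner_apply, RCLike.inner_apply, mul_comm]

lemma psum_sub {n : ℕ} (x p : EuclideanSpace ℝ (Fin n)) (k : ℕ) :
    psum (x - p) k = psum x k - psum p k := by
  simp only [psum, ← Finset.sum_sub_distrib]
  rfl

lemma convex_domCone {n : ℕ} : Convex ℝ (domCone n) := by
  intro a ha b hb s t hs ht hst i j hij
  have h1 := ha i j hij
  have h2 := hb i j hij
  show s * a j + t * b j ≤ s * a i + t * b i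
  nlinarith

/-- The variational characterization of the closest point on a convex set. -/
lemma var_ineq {n : ℕ} {x p : EuclideanSpace ℝ (Fin n)}
    (hp : p ∈ domCone n) (hmin : ∀ c ∈ domCone n, dist x p ≤ dist x c) :
    ∀ c ∈ domCone n, (inner ℝ (x - p) (c - p) : ℝ) ≤ 0 := by
  have hK : Convex ℝ (domCone n) := convex_domCone
  haveI : Nonempty ↑(domCone n) := ⟨⟨p, hp⟩⟩
  have hbdd : BddBelow (Set.range fun w : domCone n => ‖x - (w : EuclideanSpace ℝ (Fin n))‖) := by
    refine ⟨0, ?_⟩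
    rintro b ⟨w, rfl⟩
    exact norm_nonneg _
  have hiInf : ‖x - p‖ = ⨅ w : domCone n, ‖x - w‖ := by
    refine le_antisymm (le_ciInf fun w => ?_) (ciInf_le hbdd ⟨p, hp⟩)
    have := hmin w.1 w.2
    rwa [dist_eq_norm, dist_eq_norm] at this
  exact (norm_eq_iInf_iff_real_inner_le_zero hK hp).1 hiInf

lemma vext_mono {n : ℕ} {p : EuclideanSpace ℝ (Fin n)} (hp : p ∈ domCone n)
    {i j : ℕ} (hij : i ≤ j) (hj : j < n) : vext p j ≤ vext p i := by
  have hi : i < n := lt_of_le_of_lt hij hj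
  simp only [vext, dif_pos hi, dif_pos hj]
  exact hp ⟨i, hi⟩ ⟨j, hj⟩ hij

/-- For a dominant vector, the average of the first `k` entries is at least
the average of all `n` entries. -/
lemma avg {n : ℕ} {p : EuclideanSpace ℝ (Fin n)} (hp : p ∈ domCone n)
    {k : ℕ} (hk : k ≤ n) : (k : ℝ) * psum p n ≤ (n : ℝ) * psum p k := by
  rcases eq_or_lt_of_le hk with rfl | hkn
  · exact le_rfl
  · set v := vext p k with hv
    have h1 : (k : ℝ) * v ≤ psum p k := by
      rw [psum_eq p hk]
      have := Finset.card_nsmul_le_sum (Finset.range k) (fun j => vext p j) v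
        (fun j hj => vext_mono hp (le_of_lt (Finset.mem_range.1 hj)) hkn)
      simpa [nsmul_eq_mul] using this
    have h2 : psum p n - psum p k = ∑ j ∈ Finset.Ico k n, vext p j := by
      rw [psum_eq p le_rfl, psum_eq p hk, eq_comm, Finset.sum_Ico_eq_sub _ hk]
    have h3 : ∑ j ∈ Finset.Ico k n, vext p j ≤ ((n - k : ℕ) : ℝ) * v := by
      have := Finset.sum_le_card_nsmul (Finset.Ico k n) (fun j => vext p j) v
        (fun j hj => by
          obtain ⟨hj1, hj2⟩ := Finset.mem_Ico.1 hj
          exact vext_mono hp hj1 hj2)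
      simpa [nsmul_eq_mul, Nat.card_Ico] using this
    have hc : ((n - k : ℕ) : ℝ) = (n : ℝ) - (k : ℝ) := by
      rw [Nat.cast_sub hk]
    have hkr : (k : ℝ) ≤ (n : ℝ) := Nat.cast_le.2 hk
    have hk0 : (0 : ℝ) ≤ (k : ℝ) := Nat.cast_nonneg k
    rw [hc] at h3
    nlinarith [mul_le_mul_of_nonneg_left h3 hk0,
      mul_le_mul_of_nonneg_left h1 (by linarith : (0:ℝ) ≤ (n:ℝ) - (k:ℝ))]

end Stmt6Aux

/-- §2.2 for `GL_n`: if `x'` is the vector whose partial sums are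
`d'_i = max(S_i(x), (i/n)·S_n(x))` for `1 ≤ i ≤ n-1` and `d'_n = S_n(x)`,
then `r x = r x'`. -/
theorem stmt_6 (n : ℕ) (hn : 1 ≤ n)
    (r : EuclideanSpace ℝ (Fin n) → EuclideanSpace ℝ (Fin n))
    (hr : IsClosestPointMap n r)
    (x x' : EuclideanSpace ℝ (Fin n))
    (hx' : ∀ k, 1 ≤ k → k ≤ n →
      psum x' k = if k < n then max (psum x k) ((k : ℝ) / (n : ℝ) * psum x n)
                  else psum x n) :
    r x = r x' := by
  classical
  obtain ⟨hpC, hpmin⟩ := hr x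
  obtain ⟨hqC, hqmin⟩ := hr x'
  set p := r x with hpdef
  set q := r x' with hqdef
  have hn0 : (0 : ℝ) < (n : ℝ) := by exact_mod_cast hn
  have hvar := Stmt6Aux.var_ineq hpC hpmin
  have hvar' := Stmt6Aux.var_ineq hqC hqmin
  -- the cone contains 0 and 2•p
  have h0 : (0 : EuclideanSpace ℝ (Fin n)) ∈ domCone n := fun i j _ => le_rfl
  have h2p : ((2 : ℝ) • p) ∈ domCone n := fun i j hij => by
    have := hpC i j hij
    show (2 : ℝ) * p j ≤ (2 : ℝ) * p i
    linarith
  -- ⟪x - p, p⟫ = 0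
  have hB : (inner ℝ (x - p) p : ℝ) = 0 := by
    have h1 := hvar _ h2p
    have h2 := hvar _ h0
    have e1 : (2 : ℝ) • p - p = p := by
      rw [two_smul]; abel
    rw [e1] at h1
    rw [zero_sub, inner_neg_right] at h2
    linarith
  -- ⟪x - p, c⟫ ≤ 0 for all c in the cone
  have hCle : ∀ c ∈ domCone n, (inner ℝ (x - p) c : ℝ) ≤ 0 := by
    intro c hc
    have := hvar c hc
    rw [inner_sub_right, hB] at this
    linarith
  -- F2 : partial sums of p dominate those of x
  have hF2 : ∀ k, k ≤ n → psum x k ≤ psum p k := by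
    intro k hk
    have hcmem : (WithLp.toLp 2 (fun j : Fin n => if (j : ℕ) < k then (1 : ℝ) else 0) :
        EuclideanSpace ℝ (Fin n)) ∈ domCone n := by
      intro i j hij
      have hij' : (i : ℕ) ≤ (j : ℕ) := hij
      by_cases hj : (j : ℕ) < k
      · have hi : (i : ℕ) < k := lt_of_le_of_lt hij' hj
        simp [hi, hj]
      · by_cases hi : (i : ℕ) < k <;> simp [hi, hj]
    have hle := hCle _ hcmem
    rw [Stmt6Aux.inner_eq] at hle
    simp only [WithLp.ofLp_toLp] at hle
    have he : ∑ i : Fin n, (x - p) i * (if (i : ℕ) < k then (1 : ℝ) else 0)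
        = psum x k - psum p k := by
      rw [← Stmt6Aux.psum_sub, psum, Finset.sum_filter]
      refine Finset.sum_congr rfl fun i _ => ?_
      by_cases hi : (i : ℕ) < k <;> simp [hi]
    rw [he] at hle
    linarith
  -- F1 : total sums are equal
  have hF1 : psum p n = psum x n := by
    have hcmem : (WithLp.toLp 2 (fun _ : Fin n => (-1 : ℝ)) : EuclideanSpace ℝ (Fin n)) ∈ domCone n :=
      fun i j _ => le_rfl
    have hle := hCle _ hcmem
    rw [Stmt6Aux.inner_eq] at hle
    simp only [WithLp.ofLp_toLp] at hle
    have he : ∑ i : Fin n, (x - p) i * (-1 : ℝ) = psum p n - psum x n := by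
      have : ∑ i : Fin n, (x - p) i * (-1 : ℝ) = -∑ i : Fin n, (x - p) i := by
        simp [Finset.sum_neg_distrib]
      rw [this]
      have h2 : ∑ i : Fin n, (x - p) i = psum (x - p) n := by
        rw [psum]
        congr 1
        exact (Finset.filter_true_of_mem fun i _ => i.isLt).symm
      rw [h2, Stmt6Aux.psum_sub]
      ring
    rw [he] at hle
    have := hF2 n le_rfl
    linarith
  -- division bound : (k/n)·S_n(x) ≤ S_k(p)
  have hdiv : ∀ k, k ≤ n → (k : ℝ) / (n : ℝ) * psum x n ≤ psum p k := by
    intro k hk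
    rw [div_mul_eq_mul_div, div_le_iff₀ hn0]
    have havg := Stmt6Aux.avg hpC hk
    calc (k : ℝ) * psum x n = (k : ℝ) * psum p n := by rw [hF1]
      _ ≤ (n : ℝ) * psum p k := havg
      _ = psum p k * (n : ℝ) := by ring
  -- complementarity (F4)
  have hBexp : (∑ i ∈ Finset.range (n - 1),
      (psum x (i + 1) - psum p (i + 1)) * (Stmt6Aux.vext p i - Stmt6Aux.vext p (i + 1))) = 0 := by
    have h := hB
    rw [Stmt6Aux.inner_eq, Stmt6Aux.abel_formula hn] at h
    simp only [Stmt6Aux.psum_sub] at h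
    have hl : psum x n - psum p n = 0 := by rw [hF1]; ring
    rw [hl, zero_mul, add_zero] at h
    exact h
  have hterm_nonpos : ∀ i ∈ Finset.range (n - 1),
      (psum x (i + 1) - psum p (i + 1)) * (Stmt6Aux.vext p i - Stmt6Aux.vext p (i + 1)) ≤ 0 := by
    intro i hi
    have hi' := Finset.mem_range.1 hi
    have h1 : psum x (i + 1) - psum p (i + 1) ≤ 0 := by
      have := hF2 (i + 1) (by omega); linarith
    have h2 : 0 ≤ Stmt6Aux.vext p i - Stmt6Aux.vext p (i + 1) := by
      have := Stmt6Aux.vext_mono hpC (Nat.le_succ i) (by omega); linarith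
    nlinarith
  have hF4 := (Finset.sum_eq_zero_iff_of_nonpos hterm_nonpos).1 hBexp
  -- total sum of x'
  have hx'n : psum x' n = psum x n := by
    have := hx' n hn le_rfl
    rwa [if_neg (lt_irrefl n)] at this
  -- partial sums of p dominate those of x'
  have hdle : ∀ k, 1 ≤ k → k < n → psum x' k ≤ psum p k := by
    intro k hk1 hkn
    rw [hx' k hk1 (le_of_lt hkn), if_pos hkn]
    exact max_le (hF2 k (le_of_lt hkn)) (hdiv k (le_of_lt hkn))
  -- the key variational inequality for x' and p
  have hkey : ∀ c ∈ domCone n, (inner ℝ (x' - p) (c - p) : ℝ) ≤ 0 := by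
    intro c hc
    rw [inner_sub_right]
    have hlast : psum x' n - psum p n = 0 := by rw [hx'n, hF1]; ring
    have hip : (inner ℝ (x' - p) p : ℝ) = 0 := by
      rw [Stmt6Aux.inner_eq, Stmt6Aux.abel_formula hn]
      simp only [Stmt6Aux.psum_sub]
      rw [hlast, zero_mul, add_zero]
      refine Finset.sum_eq_zero fun i hi => ?_
      have hi' := Finset.mem_range.1 hi
      rcases mul_eq_zero.1 (hF4 i hi) with h | h
      · have hkn : i + 1 < n := by omega
        have hxeq : psum x (i + 1) = psum p (i + 1) := by linarith
        have hx'eq : psum x' (i + 1) = psum p (i + 1) := by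
          rw [hx' (i + 1) (by omega) (by omega), if_pos hkn, hxeq]
          exact max_eq_left (hdiv (i + 1) (by omega))
        rw [hx'eq]
        ring
      · rw [h, mul_zero]
    have hic : (inner ℝ (x' - p) c : ℝ) ≤ 0 := by
      rw [Stmt6Aux.inner_eq, Stmt6Aux.abel_formula hn]
      simp only [Stmt6Aux.psum_sub]
      rw [hlast, zero_mul, add_zero]
      refine Finset.sum_nonpos fun i hi => ?_
      have hi' := Finset.mem_range.1 hi
      have h1 : psum x' (i + 1) - psum p (i + 1) ≤ 0 := by
        have := hdle (i + 1) (by omega) (by omega); linarith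
      have h2 : 0 ≤ Stmt6Aux.vext c i - Stmt6Aux.vext c (i + 1) := by
        have := Stmt6Aux.vext_mono hc (Nat.le_succ i) (by omega); linarith
      nlinarith
    linarith
  -- uniqueness of the closest point
  have h1 := hkey q hqC
  have h2 := hvar' p hpC
  have hself : (inner ℝ (q - p) (q - p) : ℝ) ≤ 0 := by
    have e2 : (inner ℝ (x' - q) (q - p) : ℝ) = -(inner ℝ (x' - q) (p - q) : ℝ) := by
      rw [← inner_neg_right, neg_sub]
    have e : (inner ℝ (q - p) (q - p) : ℝ)
        = (inner ℝ (x' - p) (q - p) : ℝ) - (inner ℝ (x' - q) (q - p) : ℝ) := by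
      rw [← inner_sub_left]
      congr 1
      abel
    rw [e, e2]
    linarith
  have : q - p = 0 := real_inner_self_nonpos.1 hself
  have : q = p := by
    have := sub_eq_zero.1 this
    exact this
  exact this.symm
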